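/- Let d ≥ 2, r > 0, δ > 0, and N ≥ 1. Let x_0, x_1, …, x_N ∈ ℝ^d satisfy ‖x_i − x_0‖₂ ≤ r for all 0 ≤ i ≤ N, and let A = {x_0, x_1, …, x_N}. Then λ(A_{⊕(r+δ)} \ A_{⊕r}) ≤ 2^{d−1} ω_d ((r+δ)^d − r^d). -/

import Mathlib

open MeasureTheory Set Filter
open scoped ENNReal Pointwise

/-- The closed unit Euclidean ball in `ℝ^d`. -/
noncomputable def unitBall (d : ℕ) : Set (EuclideanSpace ℝ (Fin d)) := Metric.closedBall 0 1

/-- `ω_d = π^{d/2}/Γ(1+d/2)`, the volume of the unit Euclidean ball in `ℝ^d`. -/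
noncomputable def omegaVol (d : ℕ) : ℝ := Real.pi ^ ((d : ℝ) / 2) / Real.Gamma (1 + (d : ℝ) / 2)

section Auxiliary

/-- Key geometric fact: if `‖v‖ ≤ r`, `‖y - v‖ ≤ s` and `t * ‖y‖² ≤ ‖y‖² - (s² - r²)`,
`0 ≤ t ≤ 1`, then `‖t • y - v‖ ≤ r`. -/
lemma aux_lemA {E : Type*} [NormedAddCommGroup E] [InnerProductSpace ℝ E]
    {r s t : ℝ} {v y : E} (hv : ‖v‖ ≤ r) (hr : 0 ≤ r)
    (hys : ‖y - v‖ ≤ s) (ht0 : 0 ≤ t) (ht1 : t ≤ 1)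
    (htb : t * ‖y‖ ^ 2 ≤ ‖y‖ ^ 2 - (s ^ 2 - r ^ 2)) :
    ‖t • y - v‖ ≤ r := by
  have h1 : ‖y - v‖ ^ 2 ≤ s ^ 2 := pow_le_pow_left₀ (norm_nonneg _) hys 2
  have hv2 : ‖v‖ ^ 2 ≤ r ^ 2 := pow_le_pow_left₀ (norm_nonneg _) hv 2
  have e1 : ‖y - v‖ ^ 2 = ‖y‖ ^ 2 - 2 * inner ℝ y v + ‖v‖ ^ 2 := norm_sub_sq_real y v
  have e2 : ‖t • y - v‖ ^ 2 = t ^ 2 * ‖y‖ ^ 2 - 2 * (t * inner ℝ y v) + ‖v‖ ^ 2 := by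
    rw [norm_sub_sq_real, real_inner_smul_left, norm_smul, Real.norm_eq_abs, abs_of_nonneg ht0,
      mul_pow]
  set B := ‖y‖ ^ 2 with hB
  set V := ‖v‖ ^ 2 with hV
  set I : ℝ := inner ℝ y v with hI
  have h1e : B - 2 * I + V ≤ s ^ 2 := by rw [← e1]; exact h1
  have key : ‖t • y - v‖ ^ 2 ≤ r ^ 2 := by
    rw [e2]
    have p1 : t * (B - 2 * I + V) ≤ t * s ^ 2 := mul_le_mul_of_nonneg_left h1e ht0
    have p2 : t * (t * B) ≤ t * (B - (s ^ 2 - r ^ 2)) := mul_le_mul_of_nonneg_left htb ht0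
    have p3 : (1 - t) * V ≤ (1 - t) * r ^ 2 :=
      mul_le_mul_of_nonneg_left hv2 (by linarith)
    nlinarith [p1, p2, p3]
  by_contra hcon
  push_neg at hcon
  have : r ^ 2 < ‖t • y - v‖ ^ 2 := by
    apply pow_lt_pow_left₀ hcon hr
    norm_num
  linarith

/-- 1-D lemma: a set `F ⊆ (r, M]` with the pairwise property
`∀ ρ ≤ b ∈ F, b² - ρ·b ≤ Δ` is contained in a short interval near its sup. -/
lemma aux_sSup {F : Set ℝ} {r M Δ : ℝ} (hr : 0 < r)
    (h1 : ∀ ρ ∈ F, r < ρ ∧ ρ ≤ M)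
    (h2 : ∀ ρ ∈ F, ∀ b ∈ F, ρ ≤ b → b ^ 2 - ρ * b ≤ Δ)
    (hne : F.Nonempty) :
    ∃ b₀, r ≤ b₀ ∧ b₀ ≤ M ∧ F ⊆ Icc (b₀ - Δ / b₀) b₀ := by
  have hbdd : BddAbove F := ⟨M, fun ρ hρ => (h1 ρ hρ).2⟩
  set b₀ := sSup F with hb₀
  obtain ⟨ρ₁, hρ₁⟩ := hne
  have hb₀r : r ≤ b₀ := le_trans (h1 ρ₁ hρ₁).1.le (le_csSup hbdd hρ₁)
  have hb₀M : b₀ ≤ M := csSup_le ⟨ρ₁, hρ₁⟩ fun ρ hρ => (h1 ρ hρ).2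
  have hb₀pos : 0 < b₀ := lt_of_lt_of_le hr hb₀r
  refine ⟨b₀, hb₀r, hb₀M, fun ρ hρ => ?_⟩
  have hρb : ρ ≤ b₀ := le_csSup hbdd hρ
  have hcl : b₀ ∈ closure F := csSup_mem_closure ⟨ρ₁, hρ₁⟩ hbdd
  have hG : F ⊆ {b : ℝ | b ^ 2 - ρ * b ≤ Δ} := by
    intro b hb
    show b ^ 2 - ρ * b ≤ Δ
    rcases le_or_gt ρ b with h | h
    · exact h2 ρ hρ b hb h
    · have hbpos : 0 < b := lt_trans hr (h1 b hb).1
      have hΔ0 : 0 ≤ Δ := le_trans (by nlinarith [(h1 b hb).1]) (h2 b hb b hb le_rfl)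
      have hbb : b * b ≤ b * ρ := mul_le_mul_of_nonneg_left h.le hbpos.le
      have hneg : b ^ 2 - ρ * b ≤ 0 := by nlinarith [hbb]
      linarith
  have hclosed : IsClosed {b : ℝ | b ^ 2 - ρ * b ≤ Δ} :=
    isClosed_le (by fun_prop) continuous_const
  have hkey : b₀ ^ 2 - ρ * b₀ ≤ Δ := hclosed.closure_subset_iff.2 hG hcl
  refine ⟨?_, hρb⟩
  have h' : b₀ - ρ ≤ Δ / b₀ := by
    rw [le_div_iff₀ hb₀pos]
    nlinarith
  linarith

/-- Measure with density `x ^ n` of (the subtype version of) an interval. -/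
lemma aux_fiber {n : ℕ} {a b c : ℝ} (hc : 0 ≤ c)
    (hpow : ∀ x : ℝ, a ≤ x → x ≤ b → 0 < x → x ^ n ≤ c) :
    Measure.volumeIoiPow n (Subtype.val ⁻¹' Icc a b) ≤ ENNReal.ofReal (c * (b - a)) := by
  rw [Measure.volumeIoiPow,
    withDensity_apply _ (measurable_subtype_coe measurableSet_Icc),
    setLIntegral_subtype measurableSet_Ioi _ (fun x : ℝ => ENNReal.ofReal (x ^ n)),
    Subtype.image_preimage_coe]
  calc ∫⁻ x in Ioi 0 ∩ Icc a b, ENNReal.ofReal (x ^ n) ∂volume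
      ≤ ∫⁻ _x in Ioi 0 ∩ Icc a b, ENNReal.ofReal c ∂volume := by
        apply setLIntegral_mono' (measurableSet_Ioi.inter measurableSet_Icc)
        intro x hx
        exact ENNReal.ofReal_le_ofReal (hpow x hx.2.1 hx.2.2 hx.1)
    _ = ENNReal.ofReal c * volume (Ioi 0 ∩ Icc a b) := by
        rw [setLIntegral_const]
    _ ≤ ENNReal.ofReal c * ENNReal.ofReal (b - a) := by
        apply mul_le_mul_right
        calc volume (Ioi 0 ∩ Icc a b) ≤ volume (Icc a b) := measure_mono inter_subset_right
          _ = ENNReal.ofReal (b - a) := Real.volume_Icc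
    _ = ENNReal.ofReal (c * (b - a)) := (ENNReal.ofReal_mul hc).symm

lemma aux_nat (m k : ℕ) (hk : k ≤ m) :
    (m + 1) * m.choose k * 2 ^ k ≤ 2 ^ m * (m + 1).choose k := by
  have e1 : (m + 1) * m.choose k = (m + 1).choose (k + 1) * (k + 1) :=
    Nat.add_one_mul_choose_eq m k
  have e2 : (m + 1).choose (k + 1) * (k + 1) = (m + 1).choose k * (m + 1 - k) :=
    Nat.choose_succ_right_eq (m + 1) k
  have e3 : m + 1 - k = (m - k) + 1 := by omega
  have h4 : (m - k) + 1 ≤ 2 ^ (m - k) := Nat.lt_two_pow_self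
  calc (m + 1) * m.choose k * 2 ^ k = (m + 1).choose k * ((m - k) + 1) * 2 ^ k := by
        rw [e1, e2, e3]
    _ ≤ (m + 1).choose k * 2 ^ (m - k) * 2 ^ k := by
        apply Nat.mul_le_mul_right
        exact Nat.mul_le_mul_left _ h4
    _ = 2 ^ m * (m + 1).choose k := by
        rw [mul_assoc, ← pow_add, Nat.sub_add_cancel hk, Nat.mul_comm]

/-- The binomial inequality `(m+1)·δ·(2r+δ)^m ≤ 2^m·((r+δ)^{m+1} − r^{m+1})`. -/
lemma aux_binom (m : ℕ) {r δ : ℝ} (hr : 0 ≤ r) (hδ : 0 ≤ δ) :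
    (m + 1 : ℝ) * δ * (2 * r + δ) ^ m ≤ 2 ^ m * ((r + δ) ^ (m + 1) - r ^ (m + 1)) := by
  have h1 : (r + δ) ^ (m + 1) =
      (∑ k ∈ Finset.range (m + 1), r ^ k * δ ^ (m + 1 - k) * ((m + 1).choose k : ℝ))
        + r ^ (m + 1) := by
    rw [add_pow, Finset.sum_range_succ]
    simp [Nat.choose_self]
  have h2 : (2 * r + δ) ^ m =
      ∑ k ∈ Finset.range (m + 1), (2 * r) ^ k * δ ^ (m - k) * (m.choose k : ℝ) :=
    add_pow (2 * r) δ m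
  rw [h1, h2]
  have hL : (m + 1 : ℝ) * δ *
      (∑ k ∈ Finset.range (m + 1), (2 * r) ^ k * δ ^ (m - k) * (m.choose k : ℝ)) =
      ∑ k ∈ Finset.range (m + 1),
        ((m + 1 : ℝ) * δ * ((2 * r) ^ k * δ ^ (m - k) * (m.choose k : ℝ))) := by
    rw [Finset.mul_sum]
  have hR : (2 : ℝ) ^ m *
      ((∑ k ∈ Finset.range (m + 1), r ^ k * δ ^ (m + 1 - k) * ((m + 1).choose k : ℝ))
        + r ^ (m + 1) - r ^ (m + 1)) =
      ∑ k ∈ Finset.range (m + 1),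
        ((2 : ℝ) ^ m * (r ^ k * δ ^ (m + 1 - k) * ((m + 1).choose k : ℝ))) := by
    rw [add_sub_cancel_right, Finset.mul_sum]
  rw [hL, hR]
  apply Finset.sum_le_sum
  intro k hk
  have hkm : k ≤ m := Nat.lt_succ_iff.mp (Finset.mem_range.mp hk)
  have hδpow : δ * δ ^ (m - k) = δ ^ (m + 1 - k) := by
    rw [← pow_succ']
    congr 1
    omega
  have hnat := aux_nat m k hkm
  have hmono : (0 : ℝ) ≤ r ^ k * δ ^ (m + 1 - k) := by positivity
  calc (m + 1 : ℝ) * δ * ((2 * r) ^ k * δ ^ (m - k) * (m.choose k : ℝ))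
      = (((m + 1) * m.choose k * 2 ^ k : ℕ) : ℝ) * (r ^ k * δ ^ (m + 1 - k)) := by
        rw [← hδpow, mul_pow]
        push_cast
        ring
    _ ≤ ((2 ^ m * (m + 1).choose k : ℕ) : ℝ) * (r ^ k * δ ^ (m + 1 - k)) := by
        apply mul_le_mul_of_nonneg_right _ hmono
        exact_mod_cast hnat
    _ = (2 : ℝ) ^ m * (r ^ k * δ ^ (m + 1 - k) * ((m + 1).choose k : ℝ)) := by
        push_cast
        ring

lemma aux_omega (d : ℕ) :
    Real.sqrt Real.pi ^ d / Real.Gamma ((d : ℝ) / 2 + 1) = omegaVol d := by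
  rw [omegaVol]
  congr 1
  · rw [Real.sqrt_eq_rpow, ← Real.rpow_natCast (Real.pi ^ ((1 : ℝ) / 2)) d,
      ← Real.rpow_mul Real.pi_pos.le]
    congr 1
    ring
  · rw [add_comm]

lemma aux_omega_nonneg (d : ℕ) : 0 ≤ omegaVol d := by
  rw [omegaVol]
  apply div_nonneg (Real.rpow_nonneg Real.pi_pos.le _)
  have : (0 : ℝ) < 1 + (d : ℝ) / 2 := by positivity
  exact (Real.Gamma_pos_of_pos this).le

end Auxiliary

/-- For `d ≥ 2`, `r, δ > 0`, `N ≥ 1` and points `x_0,…, x_N ∈ ℝ^d` with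
`‖x_i − x_0‖₂ ≤ r`, setting `A = {x_0, …, x_N}` we have
`λ(A_{⊕(r+δ)} \ A_{⊕r}) ≤ 2^{d−1} ω_d ((r+δ)^d − r^d)`. -/
theorem volume_annulus_parallel_set_le
    (d : ℕ) (hd : 2 ≤ d) (r δ : ℝ) (hr : 0 < r) (hδ : 0 < δ) (N : ℕ) (hN : 1 ≤ N)
    (x : Fin (N + 1) → EuclideanSpace ℝ (Fin d))
    (hx : ∀ i, ‖x i - x 0‖ ≤ r) :
    volume ((Set.range x + (r + δ) • unitBall d) \ (Set.range x + r • unitBall d)) ≤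
      ENNReal.ofReal (2 ^ (d - 1) * omegaVol d * ((r + δ) ^ d - r ^ d)) := by
  classical
  set s : ℝ := r + δ with hs_def
  set M : ℝ := 2 * r + δ with hM_def
  set Δ : ℝ := M * δ with hΔ_def
  have hs_pos : 0 < s := by positivity
  have hM_pos : 0 < M := by positivity
  have hΔ_pos : 0 < Δ := by positivity
  have hsr : s ^ 2 - r ^ 2 = Δ := by simp only [hs_def, hΔ_def, hM_def]; ring
  set v : Fin (N + 1) → EuclideanSpace ℝ (Fin d) := fun i => x i - x 0 with hv_def
  have hvnorm : ∀ i, ‖v i‖ ≤ r := hx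
  have hv0 : v 0 = 0 := sub_self _
  set S : Set (EuclideanSpace ℝ (Fin d)) :=
    {y | (∃ i, ‖y - v i‖ ≤ s) ∧ ∀ i, r < ‖y - v i‖} with hS_def
  have hSmeas : MeasurableSet S := by
    have hSeq : S = (⋃ i, Metric.closedBall (v i) s) ∩
        (⋂ i, (Metric.closedBall (v i) r)ᶜ) := by
      ext y
      simp [hS_def, Metric.mem_closedBall, dist_eq_norm, not_le]
    rw [hSeq]
    exact (MeasurableSet.iUnion fun i => measurableSet_closedBall).inter
      (MeasurableSet.iInter fun i => measurableSet_closedBall.compl)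
  -- Step 1: the annulus difference translates into `S`
  have hsub : ((Set.range x + (r + δ) • unitBall d) \ (Set.range x + r • unitBall d)) ⊆
      (fun y => y + (-(x 0))) ⁻¹' S := by
    rintro y ⟨hy1, hy2⟩
    have he : ∀ i, y + -(x 0) - v i = y - x i := by
      intro i; rw [hv_def]; show y + -(x 0) - (x i - x 0) = y - x i; abel
    rw [Set.mem_preimage, hS_def]
    constructor
    · rw [Set.mem_add] at hy1
      obtain ⟨a, ha, b, hb, hab⟩ := hy1
      obtain ⟨i, rfl⟩ := ha
      obtain ⟨w, hw, rfl⟩ := hb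
      refine ⟨i, ?_⟩
      have hw1 : ‖w‖ ≤ 1 := by
        simpa [unitBall, Metric.mem_closedBall, dist_zero_right] using hw
      have hyi : y - x i = (r + δ) • w := by rw [← hab]; abel
      rw [he i, hyi, norm_smul, Real.norm_eq_abs, abs_of_pos hs_pos]
      calc s * ‖w‖ ≤ s * 1 := mul_le_mul_of_nonneg_left hw1 hs_pos.le
        _ = s := mul_one s
    · intro i
      by_contra hcon
      push_neg at hcon
      rw [he i] at hcon
      apply hy2
      rw [Set.mem_add]
      refine ⟨x i, ⟨i, rfl⟩, r • (r⁻¹ • (y - x i)), ?_, ?_⟩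
      · apply smul_mem_smul_set
        simp only [unitBall, Metric.mem_closedBall, dist_zero_right]
        rw [norm_smul, Real.norm_eq_abs, abs_of_pos (inv_pos.mpr hr)]
        rw [inv_mul_le_iff₀ hr, mul_one]
        exact hcon
      · rw [smul_inv_smul₀ hr.ne']; abel
  have htrans : volume ((fun y => y + (-(x 0))) ⁻¹' S) = volume S :=
    measure_preimage_add_right volume (-(x 0)) S
  -- Step 2: polar disintegration
  have hS0 : S ⊆ ({0}ᶜ : Set (EuclideanSpace ℝ (Fin d))) := by
    intro y hy hy0
    rw [Set.mem_singleton_iff] at hy0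
    subst hy0
    have := hy.2 0
    rw [hv0, sub_zero, norm_zero] at this
    linarith
  set ν := (volume : Measure (EuclideanSpace ℝ (Fin d))).toSphere with hν_def
  set μ₁ := Measure.volumeIoiPow (Module.finrank ℝ (EuclideanSpace ℝ (Fin d)) - 1) with hμ₁_def
  set T : Set (Metric.sphere (0 : EuclideanSpace ℝ (Fin d)) 1 × Ioi (0 : ℝ)) :=
    (fun p : Metric.sphere (0 : EuclideanSpace ℝ (Fin d)) 1 × Ioi (0 : ℝ) =>
      (p.2 : ℝ) • (p.1 : EuclideanSpace ℝ (Fin d))) ⁻¹' S with hT_def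
  have hcont : Continuous (fun p : Metric.sphere (0 : EuclideanSpace ℝ (Fin d)) 1 × Ioi (0 : ℝ) =>
      (p.2 : ℝ) • (p.1 : EuclideanSpace ℝ (Fin d))) :=
    (continuous_subtype_val.comp continuous_snd).smul (continuous_subtype_val.comp continuous_fst)
  have hTmeas : MeasurableSet T := hSmeas.preimage hcont.measurable
  have hkey : volume S = (ν.prod μ₁) T := by
    have hmp :=
      (volume : Measure (EuclideanSpace ℝ (Fin d))).measurePreserving_homeomorphUnitSphereProd
    have hpre : (homeomorphUnitSphereProd (EuclideanSpace ℝ (Fin d))) ⁻¹' T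
        = Subtype.val ⁻¹' S := by
      ext z
      have hz : (z : EuclideanSpace ℝ (Fin d)) ≠ 0 := z.2
      simp only [hT_def, Set.mem_preimage, homeomorphUnitSphereProd_apply_snd_coe,
        homeomorphUnitSphereProd_apply_fst_coe]
      rw [smul_inv_smul₀ (norm_ne_zero_iff.mpr hz)]
    calc volume S
        = (volume.comap Subtype.val) (Subtype.val ⁻¹' S) := by
          rw [comap_subtype_coe_apply
            (measurableSet_singleton (0 : EuclideanSpace ℝ (Fin d))).compl,
            Subtype.image_preimage_coe, Set.inter_eq_right.mpr hS0]
      _ = (ν.prod μ₁) T := by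
          rw [← hpre]
          exact hmp.measure_preimage hTmeas.nullMeasurableSet
  have hfin : Module.finrank ℝ (EuclideanSpace ℝ (Fin d)) = d := finrank_euclideanSpace_fin
  -- Step 3: fiber bound
  set C : ℝ≥0∞ := ENNReal.ofReal (M ^ (d - 2) * Δ) with hC_def
  have hfiber : ∀ u : Metric.sphere (0 : EuclideanSpace ℝ (Fin d)) 1,
      μ₁ (Prod.mk u ⁻¹' T) ≤ C := by
    intro u
    have hu : ‖(u : EuclideanSpace ℝ (Fin d))‖ = 1 := mem_sphere_zero_iff_norm.mp u.2
    set F : Set ℝ := {ρ : ℝ | 0 < ρ ∧ ρ • (u : EuclideanSpace ℝ (Fin d)) ∈ S} with hF_def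
    have hnormρ : ∀ ρ : ℝ, 0 < ρ → ‖ρ • (u : EuclideanSpace ℝ (Fin d))‖ = ρ := by
      intro ρ hρ
      rw [norm_smul, hu, mul_one, Real.norm_eq_abs, abs_of_pos hρ]
    have h1 : ∀ ρ ∈ F, r < ρ ∧ ρ ≤ M := by
      rintro ρ ⟨hρpos, hρS⟩
      constructor
      · have := hρS.2 0
        rw [hv0, sub_zero, hnormρ ρ hρpos] at this
        exact this
      · obtain ⟨i, hi⟩ := hρS.1
        have h3 : ‖ρ • (u : EuclideanSpace ℝ (Fin d))‖ ≤
            ‖ρ • (u : EuclideanSpace ℝ (Fin d)) - v i‖ + ‖v i‖ := by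
          calc ‖ρ • (u : EuclideanSpace ℝ (Fin d))‖
              = ‖(ρ • (u : EuclideanSpace ℝ (Fin d)) - v i) + v i‖ := by congr 1; abel
            _ ≤ _ := norm_add_le _ _
        rw [hnormρ ρ hρpos] at h3
        have : ρ ≤ s + r := le_trans h3 (add_le_add hi (hvnorm i))
        rw [hM_def]
        rw [hs_def] at this
        linarith
    have h2 : ∀ ρ ∈ F, ∀ b ∈ F, ρ ≤ b → b ^ 2 - ρ * b ≤ Δ := by
      rintro ρ ⟨hρpos, hρS⟩ b ⟨hbpos, hbS⟩ hρb
      by_contra hcon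
      push_neg at hcon
      obtain ⟨i, hi⟩ := hbS.1
      have hbnorm : ‖b • (u : EuclideanSpace ℝ (Fin d))‖ = b := hnormρ b hbpos
      have htb : (ρ / b) * ‖b • (u : EuclideanSpace ℝ (Fin d))‖ ^ 2 ≤
          ‖b • (u : EuclideanSpace ℝ (Fin d))‖ ^ 2 - (s ^ 2 - r ^ 2) := by
        rw [hbnorm, hsr]
        have hq : (ρ / b) * b ^ 2 = ρ * b := by field_simp
        rw [hq]
        linarith
      have happ := aux_lemA (hvnorm i) hr.le hi (div_nonneg hρpos.le hbpos.le)
        ((div_le_one hbpos).mpr hρb) htb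
      rw [smul_smul, div_mul_cancel₀ _ hbpos.ne'] at happ
      have := hρS.2 i
      linarith
    rcases Set.eq_empty_or_nonempty F with hFe | hFne
    · have hTempty : Prod.mk u ⁻¹' T = ∅ := by
        ext ρ
        simp only [hT_def, Set.mem_preimage, Set.mem_empty_iff_false, iff_false]
        intro hmem
        have : (ρ : ℝ) ∈ F := ⟨ρ.2, hmem⟩
        rw [hFe] at this
        exact this
      rw [hTempty]
      simp
    · obtain ⟨b₀, hb₀r, hb₀M, hFsub⟩ := aux_sSup hr h1 h2 hFne
      have hb₀pos : 0 < b₀ := lt_of_lt_of_le hr hb₀r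
      have hsub2 : Prod.mk u ⁻¹' T ⊆ Subtype.val ⁻¹' Icc (b₀ - Δ / b₀) b₀ := by
        rintro ⟨ρ, hρ⟩ hmem
        exact hFsub ⟨hρ, hmem⟩
      calc μ₁ (Prod.mk u ⁻¹' T) ≤ μ₁ (Subtype.val ⁻¹' Icc (b₀ - Δ / b₀) b₀) :=
            measure_mono hsub2
        _ ≤ ENNReal.ofReal (b₀ ^ (d - 1) * (b₀ - (b₀ - Δ / b₀))) := by
            rw [hμ₁_def, hfin]
            exact aux_fiber (pow_nonneg hb₀pos.le _)
              (fun x hax hxb hxpos => pow_le_pow_left₀ hxpos.le hxb _)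
        _ ≤ C := by
            rw [hC_def]
            apply ENNReal.ofReal_le_ofReal
            have e1 : b₀ - (b₀ - Δ / b₀) = Δ / b₀ := by ring
            have e2 : b₀ ^ (d - 1) = b₀ ^ (d - 2) * b₀ := by
              rw [← pow_succ]
              congr 1
              omega
            rw [e1, e2]
            have e3 : b₀ ^ (d - 2) * b₀ * (Δ / b₀) = b₀ ^ (d - 2) * Δ := by
              field_simp
            rw [e3]
            apply mul_le_mul_of_nonneg_right _ hΔ_pos.le
            exact pow_le_pow_left₀ hb₀pos.le hb₀M _
  -- Step 4: total bound
  have htotal : (ν.prod μ₁) T ≤ ν Set.univ * C := by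
    rw [Measure.prod_apply hTmeas]
    calc ∫⁻ u, μ₁ (Prod.mk u ⁻¹' T) ∂ν ≤ ∫⁻ _u, C ∂ν := lintegral_mono hfiber
      _ = ν Set.univ * C := by rw [lintegral_const, mul_comm]
  have hν_univ : ν Set.univ = (d : ℝ≥0∞) * ENNReal.ofReal (omegaVol d) := by
    haveI : Nonempty (Fin d) := ⟨⟨0, by omega⟩⟩
    rw [hν_def, Measure.toSphere_apply_univ, hfin,
      EuclideanSpace.volume_ball (Fin d) (0 : EuclideanSpace ℝ (Fin d)) 1]
    simp only [ENNReal.ofReal_one, one_pow, one_mul, Fintype.card_fin]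
    rw [aux_omega]
  -- Step 5: real arithmetic
  have hreal : (d : ℝ) * omegaVol d * (M ^ (d - 2) * Δ) ≤
      2 ^ (d - 1) * omegaVol d * ((r + δ) ^ d - r ^ d) := by
    have hcore : (d : ℝ) * (M ^ (d - 2) * Δ) ≤ 2 ^ (d - 1) * ((r + δ) ^ d - r ^ d) := by
      have e4 : M ^ (d - 2) * Δ = δ * M ^ (d - 1) := by
        rw [hΔ_def]
        have : M ^ (d - 1) = M ^ (d - 2) * M := by
          rw [← pow_succ]
          congr 1
          omega
        rw [this]
        ring
      rw [e4]
      have hbin := aux_binom (d - 1) hr.le hδ.le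
      have hd1 : (d - 1) + 1 = d := by omega
      rw [hd1] at hbin
      have hcast : ((d - 1 : ℕ) : ℝ) + 1 = (d : ℝ) := by
        have : ((d - 1 : ℕ) : ℝ) = (d : ℝ) - 1 := by
          push_cast [Nat.cast_sub (by omega : 1 ≤ d)]
          ring
        rw [this]
        ring
      rw [hcast] at hbin
      calc (d : ℝ) * (δ * M ^ (d - 1)) = (d : ℝ) * δ * (2 * r + δ) ^ (d - 1) := by
            rw [hM_def]; ring
        _ ≤ 2 ^ (d - 1) * ((r + δ) ^ d - r ^ d) := hbin
    calc (d : ℝ) * omegaVol d * (M ^ (d - 2) * Δ)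
        = omegaVol d * ((d : ℝ) * (M ^ (d - 2) * Δ)) := by ring
      _ ≤ omegaVol d * (2 ^ (d - 1) * ((r + δ) ^ d - r ^ d)) :=
          mul_le_mul_of_nonneg_left hcore (aux_omega_nonneg d)
      _ = 2 ^ (d - 1) * omegaVol d * ((r + δ) ^ d - r ^ d) := by ring
  -- Final chain
  calc volume ((Set.range x + (r + δ) • unitBall d) \ (Set.range x + r • unitBall d))
      ≤ volume ((fun y => y + (-(x 0))) ⁻¹' S) := measure_mono hsub
    _ = volume S := htrans
    _ = (ν.prod μ₁) T := hkey
    _ ≤ ν Set.univ * C := htotal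
    _ = (d : ℝ≥0∞) * ENNReal.ofReal (omegaVol d) * ENNReal.ofReal (M ^ (d - 2) * Δ) := by
        rw [hν_univ]
    _ ≤ ENNReal.ofReal (2 ^ (d - 1) * omegaVol d * ((r + δ) ^ d - r ^ d)) := by
        rw [← ENNReal.ofReal_natCast d, ← ENNReal.ofReal_mul (Nat.cast_nonneg d),
          ← ENNReal.ofReal_mul (mul_nonneg (Nat.cast_nonneg d) (aux_omega_nonneg d))]
        exact ENNReal.ofReal_le_ofReal hreal
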